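/- Comparison structure of the approximating drivers: For every integer m ≥ 1 there exists a map assigning to each pair of bounded Borel functions u, u' : ℝ → ℝ with ∫u² dν < ∞ and ∫(u')² dν < ∞ a Borel function k_m(u,u') : ℝ → ℝ such that: (i) f_m(z,u) − f_m(z,u') ≤ ∫_ℝ k_m(u,u')(e) (u(e) − u'(e)) ν(de) for all z ∈ ℝ; and (ii) for every M > 0 there exist constants C̲_{M,m} > 0 and C̄_{M,m} > 0 such that whenever sup_e |u(e)| ≤ M and sup_e |u'(e)| ≤ M, one has (−1 + C̲_{M,m}) 1_{|e| > 1/m} ≤ k_m(u,u')(e) ≤ C̄_{M,m} 1_{|e| > 1/m} for all e ∈ ℝ. -/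

import Mathlib

open MeasureTheory Set

noncomputable section

/-- The exponential penalty function `h_λ(x) = (e^{λx} − λx − 1)/λ`. -/
def hpen (lam x : ℝ) : ℝ := (Real.exp (lam * x) - lam * x - 1) / lam

/-- `φ(x) = arctan x` for `x > 0`, `φ(x) = x` for `x ≤ 0`. -/
def phi0 (x : ℝ) : ℝ := if 0 < x then Real.arctan x else x

/-- The truncation from above `φ_m(x) = φ(x − m) + m`. -/
def phim (m : ℕ) (x : ℝ) : ℝ := phi0 (x - m) + m

/-- The plateau truncation `ρ_m`. -/
def rhom (m : ℕ) (x : ℝ) : ℝ :=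
  if -((m : ℝ) + 1) < x ∧ x < -(m : ℝ) then x + m + 1
  else if -(m : ℝ) ≤ x ∧ x ≤ (m : ℝ) then 1
  else if (m : ℝ) < x ∧ x ≤ (m : ℝ) + 1 then (m : ℝ) + 1 - x
  else 0

/-- `ν_m`: the restriction of `ν` to `ℝ \ [−1/m, 1/m]`. -/
def numeas (ν : Measure ℝ) (m : ℕ) : Measure ℝ :=
  ν.restrict (Set.Icc (-(1 / (m : ℝ))) (1 / (m : ℝ)))ᶜ

/-- The truncated no-signal part `f¹_m(z,u,p)` of the driver. -/
def f1m (ν : Measure ℝ) (η γ : ℝ → ℝ) (lam Cke : ℝ) (m : ℕ)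
    (z : ℝ) (u : ℝ → ℝ) (p : ℝ) : ℝ :=
  lam / 2 * (p - (z + Cke / lam)) ^ 2 * rhom m z
    + (∫ e in {e | γ e = 0}, hpen lam (phim m (u e - p * η e)) ∂(numeas ν m))
    - p * ∫ e in {e | γ e = 0}, η e ∂ν

/-- The truncated signal part `f²_m(g,u,p)` of the driver. -/
def f2m (η γ : ℝ → ℝ) (K : ℝ → Measure ℝ) (lam : ℝ) (m : ℕ)
    (g : ℝ) (u : ℝ → ℝ) (p : ℝ) : ℝ :=
  (∫ e in {e | γ e = g},
      (if 1 / (m : ℝ) < |e| then hpen lam (phim m (u e - p * η e)) else 0) ∂(K g))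
    - p * ∫ e in {e | γ e = g}, η e ∂(K g)

/-- The truncated driver `f_m(z,u)`. -/
def fm (ν μ : Measure ℝ) (η γ : ℝ → ℝ) (K : ℝ → Measure ℝ)
    (lam Cke pil pib : ℝ) (m : ℕ) (z : ℝ) (u : ℝ → ℝ) : ℝ :=
  (⨅ p : Set.Icc (-pil) pib, f1m ν η γ lam Cke m z u p)
    + (∫ g in ({0}ᶜ : Set ℝ), (⨅ p : Set.Icc (-pil) pib, f2m η γ K lam m g u p) ∂μ)
    - Cke * z - Cke ^ 2 / (2 * lam)

namespace FmCmp


lemma hpen_nonneg {lam : ℝ} (hlam : 0 < lam) (x : ℝ) : 0 ≤ hpen lam x := by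
  have h := Real.add_one_le_exp (lam * x)
  unfold hpen
  apply div_nonneg _ hlam.le
  linarith

lemma hpen_sub_le {lam : ℝ} (hlam : 0 < lam) {s t : ℝ} (h : t ≤ s) :
    hpen lam s - hpen lam t ≤ (Real.exp (lam * s) - 1) * (s - t) := by
  have key : 1 - Real.exp (-(lam * (s - t))) ≤ lam * (s - t) := by
    have := Real.add_one_le_exp (-(lam * (s - t))); linarith
  have hexp : Real.exp (lam * t) = Real.exp (lam * s) * Real.exp (-(lam * (s - t))) := by
    rw [← Real.exp_add]; ring_nf
  have hpos := Real.exp_pos (lam * s)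
  have h1 : Real.exp (lam * s) - Real.exp (lam * t) ≤ lam * (s - t) * Real.exp (lam * s) := by
    rw [hexp]; nlinarith
  unfold hpen
  rw [div_sub_div_same, div_le_iff₀ hlam]
  ring_nf
  nlinarith

lemma le_hpen_sub {lam : ℝ} (hlam : 0 < lam) {s t : ℝ} (h : t ≤ s) :
    (Real.exp (lam * t) - 1) * (s - t) ≤ hpen lam s - hpen lam t := by
  have key : lam * (s - t) + 1 ≤ Real.exp (lam * (s - t)) := Real.add_one_le_exp _
  have hexp : Real.exp (lam * s) = Real.exp (lam * t) * Real.exp (lam * (s - t)) := by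
    rw [← Real.exp_add]; ring_nf
  have hpos := Real.exp_pos (lam * t)
  have h1 : lam * (s - t) * Real.exp (lam * t) ≤ Real.exp (lam * s) - Real.exp (lam * t) := by
    rw [hexp]; nlinarith
  unfold hpen
  rw [div_sub_div_same, le_div_iff₀ hlam]
  ring_nf
  nlinarith

lemma mono_id_sub_arctan : Monotone (fun x : ℝ => x - Real.arctan x) := by
  have hd : ∀ x : ℝ, HasDerivAt (fun x : ℝ => x - Real.arctan x) (1 - 1 / (1 + x ^ 2)) x :=
    fun x => (hasDerivAt_id x).sub (Real.hasDerivAt_arctan x)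
  apply monotone_of_deriv_nonneg
  · exact differentiable_id.sub Real.differentiable_arctan
  · intro x
    rw [(hd x).deriv]
    have : (1 : ℝ) ≤ 1 + x ^ 2 := by nlinarith
    have h2 : 1 / (1 + x ^ 2) ≤ 1 := by
      rw [div_le_one (by nlinarith)]; linarith
    linarith

lemma arctan_le_self {x : ℝ} (hx : 0 ≤ x) : Real.arctan x ≤ x := by
  have := mono_id_sub_arctan hx
  simp [Real.arctan_zero] at this
  linarith

lemma phi0_mono : Monotone phi0 := by
  intro a b hab
  unfold phi0
  split_ifs with ha hb hb
  · exact Real.arctan_strictMono.monotone hab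
  · exact absurd (ha.trans_le hab) hb
  · have : Real.arctan 0 ≤ Real.arctan b := Real.arctan_strictMono.monotone (le_of_lt hb)
    rw [Real.arctan_zero] at this
    linarith [not_lt.mp ha]
  · exact hab

lemma phi0_sub_le {a b : ℝ} (hab : a ≤ b) : phi0 b - phi0 a ≤ b - a := by
  unfold phi0
  split_ifs with hb ha ha
  · have h2 := mono_id_sub_arctan hab
    simp only at h2
    linarith
  · have := arctan_le_self (le_of_lt hb)
    linarith
  · exact absurd (ha.trans_le hab) hb
  · linarith

lemma phi0_le_pi_div_two (x : ℝ) : phi0 x ≤ Real.pi / 2 := by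
  unfold phi0
  split_ifs with h
  · exact (Real.arctan_lt_pi_div_two x).le
  · linarith [Real.pi_pos, not_lt.mp h]

lemma phi0_eq_of_neg {x : ℝ} (h : phi0 x < 0) : phi0 x = x := by
  unfold phi0 at *
  split_ifs with hx
  · have : 0 < Real.arctan x := by
      rw [← Real.arctan_zero]; exact Real.arctan_strictMono hx
    split_ifs at h; linarith
  · rfl

lemma phim_mono (m : ℕ) : Monotone (phim m) := fun a b hab => by
  unfold phim; have := phi0_mono (sub_le_sub_right hab (m : ℝ)); linarith

lemma phim_sub_le (m : ℕ) {a b : ℝ} (hab : a ≤ b) : phim m b - phim m a ≤ b - a := by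
  unfold phim
  have := phi0_sub_le (sub_le_sub_right hab (m : ℝ))
  linarith

lemma phim_le (m : ℕ) (x : ℝ) : phim m x ≤ (m : ℝ) + Real.pi / 2 := by
  unfold phim; linarith [phi0_le_pi_div_two (x - m)]

lemma phim_eq_of_neg {m : ℕ} {x : ℝ} (h : phim m x < 0) : phim m x = x := by
  unfold phim at *
  have hm : (0 : ℝ) ≤ m := Nat.cast_nonneg m
  have h0 : phi0 (x - m) < 0 := by linarith
  rw [phi0_eq_of_neg h0]; ring

lemma phim_lower {m : ℕ} {R x : ℝ} (hR : 0 ≤ R) (hx : -R ≤ x) : -R ≤ phim m x := by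
  rcases lt_or_ge (phim m x) 0 with h | h
  · rw [phim_eq_of_neg h]; exact hx
  · linarith


def Hf (lam : ℝ) (m : ℕ) (x : ℝ) : ℝ := hpen lam (phim m x)

lemma continuous_phi0 : Continuous phi0 := by
  have : phi0 = fun x => if x ≤ 0 then x else Real.arctan x := by
    funext x
    unfold phi0
    rcases lt_trichotomy x 0 with h | h | h
    · rw [if_neg (by linarith), if_pos h.le]
    · subst h; simp [Real.arctan_zero, id]
    · rw [if_pos h, if_neg (by linarith)]
  rw [this]
  exact continuous_id.if_le Real.continuous_arctan continuous_id continuous_const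
    (fun x hx => by simp only [id_eq] at hx ⊢; rw [hx, Real.arctan_zero])

lemma continuous_phim (m : ℕ) : Continuous (phim m) := by
  unfold phim
  exact ((continuous_phi0.comp (continuous_id.sub continuous_const)).add continuous_const)

lemma continuous_hpen (lam : ℝ) : Continuous (hpen lam) := by
  unfold hpen
  apply Continuous.div_const
  apply Continuous.sub
  apply Continuous.sub
  · exact Real.continuous_exp.comp (continuous_const.mul continuous_id)
  · exact continuous_const.mul continuous_id
  · exact continuous_const

lemma continuous_Hf (lam : ℝ) (m : ℕ) : Continuous (Hf lam m) :=
  (continuous_hpen lam).comp (continuous_phim m)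

/-- Upper Lipschitz-type bound for `Hf`. -/
lemma Hf_sub_le {lam : ℝ} (hlam : 0 < lam) (m : ℕ) {a b : ℝ} (hba : b ≤ a) :
    Hf lam m a - Hf lam m b ≤ (Real.exp (lam * ((m : ℝ) + Real.pi / 2)) - 1) * (a - b) := by
  set s := phim m a with hs
  set t := phim m b with ht
  have hts : t ≤ s := phim_mono m hba
  have hst : s - t ≤ a - b := phim_sub_le m hba
  have hsle : s ≤ (m : ℝ) + Real.pi / 2 := phim_le m a
  have h1 : Hf lam m a - Hf lam m b ≤ (Real.exp (lam * s) - 1) * (s - t) :=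
    hpen_sub_le hlam hts
  have hCu : (1 : ℝ) ≤ Real.exp (lam * ((m : ℝ) + Real.pi / 2)) := by
    rw [← Real.exp_zero]
    apply Real.exp_le_exp.2
    have : (0:ℝ) ≤ (m : ℝ) + Real.pi / 2 := by positivity
    positivity
  rcases le_or_gt (Real.exp (lam * s)) 1 with h | h
  · have : (Real.exp (lam * s) - 1) * (s - t) ≤ 0 :=
      mul_nonpos_of_nonpos_of_nonneg (by linarith) (by linarith)
    nlinarith
  · have h2 : (Real.exp (lam * s) - 1) * (s - t) ≤ (Real.exp (lam * s) - 1) * (a - b) := by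
      apply mul_le_mul_of_nonneg_left hst (by linarith)
    have h3 : Real.exp (lam * s) ≤ Real.exp (lam * ((m : ℝ) + Real.pi / 2)) :=
      Real.exp_le_exp.2 (by nlinarith)
    nlinarith

/-- Lower Lipschitz-type bound for `Hf`. -/
lemma le_Hf_sub {lam : ℝ} (hlam : 0 < lam) (m : ℕ) {a b R : ℝ} (hR : 0 ≤ R) (hba : b ≤ a)
    (hb : -R ≤ b) :
    (Real.exp (-(lam * R)) - 1) * (a - b) ≤ Hf lam m a - Hf lam m b := by
  set s := phim m a with hs
  set t := phim m b with ht
  have hts : t ≤ s := phim_mono m hba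
  have hst : s - t ≤ a - b := phim_sub_le m hba
  have h1 : (Real.exp (lam * t) - 1) * (s - t) ≤ Hf lam m a - Hf lam m b :=
    le_hpen_sub hlam hts
  have hL : Real.exp (-(lam * R)) ≤ 1 := by
    rw [← Real.exp_zero]
    exact Real.exp_le_exp.2 (by nlinarith)
  rcases le_or_gt 0 t with h | h
  · have h2 : (1:ℝ) ≤ Real.exp (lam * t) := by
      rw [← Real.exp_zero]; exact Real.exp_le_exp.2 (by nlinarith)
    nlinarith
  · have htb : t = b := phim_eq_of_neg h
    have h3 : Real.exp (-(lam * R)) ≤ Real.exp (lam * t) := by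
      apply Real.exp_le_exp.2; rw [htb]; nlinarith
    have h4 : Real.exp (lam * t) < 1 := by
      rw [← Real.exp_zero]; exact Real.exp_lt_exp.2 (by nlinarith)
    have h5 : (Real.exp (lam * t) - 1) * (a - b) ≤ (Real.exp (lam * t) - 1) * (s - t) := by
      nlinarith
    nlinarith
def proj (pil pib q : ℝ) : ℝ := max (-pil) (min pib q)

lemma proj_mem {pil pib : ℝ} (h : -pil ≤ pib) (q : ℝ) : proj pil pib q ∈ Icc (-pil) pib :=
  ⟨le_max_left _ _, max_le h (min_le_left _ _)⟩

lemma proj_eq_self {pil pib p : ℝ} (hp : p ∈ Icc (-pil) pib) : proj pil pib p = p := by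
  unfold proj
  rw [min_eq_right hp.2, max_eq_right hp.1]

lemma proj_lipschitz {pil pib : ℝ} (q p : ℝ) : |proj pil pib q - proj pil pib p| ≤ |q - p| := by
  unfold proj
  calc |max (-pil) (min pib q) - max (-pil) (min pib p)|
      ≤ max |(-pil) - (-pil)| |min pib q - min pib p| := abs_max_sub_max_le_max _ _ _ _
    _ ≤ |q - p| := by
        apply max_le
        · simp [abs_nonneg]
        · calc |min pib q - min pib p| ≤ max |pib - pib| |q - p| := abs_min_sub_min_le_max _ _ _ _
            _ ≤ |q - p| := by apply max_le <;> simp [abs_nonneg]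

/-- A sequence of rationals whose projections converge to a given point of the interval. -/
lemma exists_seq_tendsto_proj {pil pib : ℝ} {p : ℝ} (hp : p ∈ Icc (-pil) pib) :
    ∃ s : ℕ → ℚ, Filter.Tendsto (fun n => proj pil pib (s n)) Filter.atTop (nhds p) := by
  have hch : ∀ n : ℕ, ∃ q : ℚ, p < (q : ℝ) ∧ (q : ℝ) < p + 1 / (n + 1) := by
    intro n
    have : (0:ℝ) < 1 / ((n : ℝ) + 1) := by positivity
    exact exists_rat_btwn (by linarith)
  choose s hs1 hs2 using hch
  refine ⟨s, ?_⟩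
  rw [tendsto_iff_dist_tendsto_zero]
  apply squeeze_zero (fun n => dist_nonneg) (g := fun n : ℕ => 1 / ((n : ℝ) + 1))
  · intro n
    have h1 : |proj pil pib (s n) - p| ≤ |(s n : ℝ) - p| := by
      calc |proj pil pib (s n) - p| = |proj pil pib (s n) - proj pil pib p| := by
            rw [proj_eq_self hp]
        _ ≤ |(s n : ℝ) - p| := proj_lipschitz _ _
    rw [Real.dist_eq]
    have h2 : |(s n : ℝ) - p| ≤ 1 / ((n : ℝ) + 1) := by
      rw [abs_of_pos (by linarith [hs1 n])]
      linarith [hs2 n]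
    linarith
  · exact tendsto_one_div_add_atTop_nhds_zero_nat

/-- Difference quotient of `Hf` along `u, u'`. -/
def DQ (lam : ℝ) (m : ℕ) (η u u' : ℝ → ℝ) (p e : ℝ) : ℝ :=
  (Hf lam m (u e - p * η e) - Hf lam m (u' e - p * η e)) / (u e - u' e)

lemma DQ_bounds {lam : ℝ} (hlam : 0 < lam) (m : ℕ) {η u u' : ℝ → ℝ} {C₀ M P : ℝ}
    (hη : ∀ e, |η e| ≤ C₀) (hu : ∀ e, |u e| ≤ M) (hu' : ∀ e, |u' e| ≤ M)
    (hC₀ : 0 ≤ C₀) (hP : 0 ≤ P) {p e : ℝ} (hp : |p| ≤ P) (hne : u e ≠ u' e) :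
    Real.exp (-(lam * (M + P * C₀))) - 1 ≤ DQ lam m η u u' p e ∧
      DQ lam m η u u' p e ≤ Real.exp (lam * ((m : ℝ) + Real.pi / 2)) - 1 := by
  set R := M + P * C₀ with hR
  have hM : 0 ≤ M := le_trans (abs_nonneg _) (hu e)
  have hRnn : 0 ≤ R := by positivity
  set a := u e - p * η e with ha
  set b := u' e - p * η e with hb
  have hab : a - b = u e - u' e := by ring
  have haR : |a| ≤ R := by
    have h1 : |p * η e| ≤ P * C₀ := by
      rw [abs_mul]
      exact mul_le_mul hp (hη e) (abs_nonneg _) hP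
    calc |a| ≤ |u e| + |p * η e| := abs_sub _ _
      _ ≤ R := by rw [hR]; linarith [hu e]
  have hbR : |b| ≤ R := by
    have h1 : |p * η e| ≤ P * C₀ := by
      rw [abs_mul]
      exact mul_le_mul hp (hη e) (abs_nonneg _) hP
    calc |b| ≤ |u' e| + |p * η e| := abs_sub _ _
      _ ≤ R := by rw [hR]; linarith [hu' e]
  rcases lt_or_gt_of_ne hne with h | h
  · -- u e < u' e : a < b
    have hba : a ≤ b := by rw [ha, hb]; linarith
    have hd : 0 < u' e - u e := by linarith
    have e1 : b - a = u' e - u e := by rw [ha, hb]; ring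
    have hup := Hf_sub_le hlam m (a := b) (b := a) hba
    have hlo := le_Hf_sub hlam m (a := b) (b := a) hRnn hba (neg_le_of_abs_le haR)
    rw [e1] at hup hlo
    have hrw : DQ lam m η u u' p e =
        (Hf lam m b - Hf lam m a) / (u' e - u e) := by
      unfold DQ
      rw [← ha, ← hb, show Hf lam m a - Hf lam m b = -(Hf lam m b - Hf lam m a) by ring,
        show u e - u' e = -(u' e - u e) by ring, neg_div_neg_eq]
    rw [hrw]
    constructor
    · rw [le_div_iff₀ hd]; linarith
    · rw [div_le_iff₀ hd]; linarith
  · have hba : b ≤ a := by rw [ha, hb]; linarith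
    have hd : 0 < u e - u' e := by linarith
    have e1 : a - b = u e - u' e := by rw [ha, hb]; ring
    have hup := Hf_sub_le hlam m hba
    have hlo := le_Hf_sub hlam m hRnn hba (neg_le_of_abs_le hbR)
    rw [e1] at hup hlo
    unfold DQ
    rw [← ha, ← hb]
    constructor
    · rw [le_div_iff₀ hd]; linarith
    · rw [div_le_iff₀ hd]; linarith


lemma rhom_nonneg (m : ℕ) (x : ℝ) : 0 ≤ rhom m x := by
  unfold rhom
  split_ifs with h1 h2 h3
  · linarith [h1.1]
  · norm_num
  · linarith [h3.2]
  · exact le_refl 0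

def kfun (lam pil pib : ℝ) (m : ℕ) (η u u' : ℝ → ℝ) (e : ℝ) : ℝ :=
  if 1 / (m : ℝ) < |e| then
    (if u' e < u e then ⨆ q : ℚ, DQ lam m η u u' (proj pil pib (q : ℝ)) e
     else if u e < u' e then ⨅ q : ℚ, DQ lam m η u u' (proj pil pib (q : ℝ)) e
     else 1)
  else 0

lemma kfun_bounds {lam pil pib : ℝ} (hlam : 0 < lam) (hpil : 0 < pil) (hpib : 0 < pib)
    (m : ℕ) {η u u' : ℝ → ℝ} {C₀ M : ℝ} (hη : ∀ e, |η e| ≤ C₀) (hC₀ : 0 ≤ C₀)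
    (hu : ∀ e, |u e| ≤ M) (hu' : ∀ e, |u' e| ≤ M) (e : ℝ) :
    (Real.exp (-(lam * (M + max pil pib * C₀))) - 1) * (if 1/(m:ℝ) < |e| then (1:ℝ) else 0)
      ≤ kfun lam pil pib m η u u' e ∧
    kfun lam pil pib m η u u' e ≤
      (max (Real.exp (lam * ((m:ℝ) + Real.pi/2)) - 1) 1)
        * (if 1/(m:ℝ) < |e| then (1:ℝ) else 0) := by
  set P := max pil pib with hP
  have hPpos : 0 < P := lt_of_lt_of_le hpil (le_max_left _ _)
  have hM : 0 ≤ M := le_trans (abs_nonneg _) (hu e)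
  set L := Real.exp (-(lam * (M + P * C₀))) - 1 with hL
  set U' := Real.exp (lam * ((m:ℝ) + Real.pi/2)) - 1 with hU'
  have hLle : L ≤ 0 := by
    have : Real.exp (-(lam * (M + P * C₀))) ≤ 1 := by
      rw [Real.exp_le_one_iff]
      have : 0 ≤ lam * (M + P * C₀) := by positivity
      linarith
    rw [hL]; linarith
  have hprojP : ∀ q : ℚ, |proj pil pib (q : ℝ)| ≤ P := by
    intro q
    have h := proj_mem (show -pil ≤ pib by linarith) (q : ℝ)
    rw [Set.mem_Icc] at h
    rw [abs_le]
    have hpP : pil ≤ P := le_max_left _ _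
    have hbP : pib ≤ P := le_max_right _ _
    exact ⟨by linarith [h.1], by linarith [h.2]⟩
  by_cases hind : 1/(m:ℝ) < |e|
  · rw [if_pos hind]
    unfold kfun
    rw [if_pos hind]
    rcases lt_trichotomy (u' e) (u e) with h | h | h
    · rw [if_pos h]
      have hne : u e ≠ u' e := ne_of_gt h
      have hbdd : BddAbove (Set.range fun q : ℚ => DQ lam m η u u' (proj pil pib (q : ℝ)) e) := by
        refine ⟨U', ?_⟩
        rintro _ ⟨q, rfl⟩
        exact (DQ_bounds hlam m hη hu hu' hC₀ hPpos.le (hprojP q) hne).2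
      constructor
      · rw [mul_one]
        calc L ≤ DQ lam m η u u' (proj pil pib ((0:ℚ):ℝ)) e :=
              (DQ_bounds hlam m hη hu hu' hC₀ hPpos.le (hprojP 0) hne).1
          _ ≤ _ := le_ciSup hbdd (0 : ℚ)
      · rw [mul_one]
        refine le_trans (ciSup_le fun q => ?_) (le_max_left _ _)
        exact (DQ_bounds hlam m hη hu hu' hC₀ hPpos.le (hprojP q) hne).2
    · rw [if_neg (by rw [h]; exact lt_irrefl _), if_neg (by rw [h]; exact lt_irrefl _)]
      constructor
      · rw [mul_one]; linarith
      · rw [mul_one]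
        exact le_trans (by norm_num) (le_max_right _ _)
    · rw [if_neg (by exact fun hc => absurd h (not_lt.2 hc.le)), if_pos h]
      have hne : u e ≠ u' e := ne_of_lt h
      have hbddb : BddBelow (Set.range fun q : ℚ => DQ lam m η u u' (proj pil pib (q : ℝ)) e) := by
        refine ⟨L, ?_⟩
        rintro _ ⟨q, rfl⟩
        exact (DQ_bounds hlam m hη hu hu' hC₀ hPpos.le (hprojP q) hne).1
      constructor
      · rw [mul_one]
        exact le_ciInf fun q => (DQ_bounds hlam m hη hu hu' hC₀ hPpos.le (hprojP q) hne).1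
      · rw [mul_one]
        calc (⨅ q : ℚ, DQ lam m η u u' (proj pil pib (q : ℝ)) e)
            ≤ DQ lam m η u u' (proj pil pib ((0:ℚ):ℝ)) e := ciInf_le hbddb (0 : ℚ)
          _ ≤ U' := (DQ_bounds hlam m hη hu hu' hC₀ hPpos.le (hprojP 0) hne).2
          _ ≤ _ := le_max_left _ _
  · rw [if_neg hind]
    unfold kfun
    rw [if_neg hind]
    norm_num

lemma kfun_abs_le {lam pil pib : ℝ} (hlam : 0 < lam) (hpil : 0 < pil) (hpib : 0 < pib)
    (m : ℕ) {η u u' : ℝ → ℝ} {C₀ M : ℝ} (hη : ∀ e, |η e| ≤ C₀) (hC₀ : 0 ≤ C₀)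
    (hu : ∀ e, |u e| ≤ M) (hu' : ∀ e, |u' e| ≤ M) (e : ℝ) :
    |kfun lam pil pib m η u u' e| ≤
      (max (Real.exp (lam * ((m:ℝ) + Real.pi/2)) - 1) 1)
        * (if 1/(m:ℝ) < |e| then (1:ℝ) else 0) := by
  obtain ⟨h1, h2⟩ := kfun_bounds hlam hpil hpib m hη hC₀ hu hu' e
  set U := max (Real.exp (lam * ((m:ℝ) + Real.pi/2)) - 1) 1 with hU
  have hU1 : (1:ℝ) ≤ U := le_max_right _ _
  have hexple : Real.exp (-(lam * (M + max pil pib * C₀))) ≤ 1 := by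
    rw [Real.exp_le_one_iff]
    have hM : 0 ≤ M := le_trans (abs_nonneg _) (hu e)
    have hPpos : (0:ℝ) < max pil pib := lt_of_lt_of_le hpil (le_max_left _ _)
    have : 0 ≤ lam * (M + max pil pib * C₀) := by positivity
    linarith
  rw [abs_le]
  refine ⟨?_, h2⟩
  by_cases hind : 1/(m:ℝ) < |e|
  · rw [if_pos hind] at h1 ⊢
    rw [mul_one] at h1 ⊢
    nlinarith [Real.exp_pos (-(lam * (M + max pil pib * C₀)))]
  · rw [if_neg hind] at h1 ⊢
    rw [mul_zero] at h1 ⊢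
    unfold kfun at h1 ⊢
    rw [if_neg hind] at h1 ⊢
    norm_num

lemma kfun_measurable {lam pil pib : ℝ} (m : ℕ) {η u u' : ℝ → ℝ}
    (hu : Measurable u) (hu' : Measurable u') (hη : Measurable η) :
    Measurable (kfun lam pil pib m η u u') := by
  have hDQ : ∀ q : ℚ, Measurable fun e => DQ lam m η u u' (proj pil pib (q : ℝ)) e := by
    intro q
    unfold DQ
    apply Measurable.div
    · apply Measurable.sub
      · exact (continuous_Hf lam m).measurable.comp (hu.sub (measurable_const.mul hη))
      · exact (continuous_Hf lam m).measurable.comp (hu'.sub (measurable_const.mul hη))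
    · exact hu.sub hu'
  have hsup : Measurable fun e => ⨆ q : ℚ, DQ lam m η u u' (proj pil pib (q : ℝ)) e :=
    Measurable.iSup hDQ
  have hinf : Measurable fun e => ⨅ q : ℚ, DQ lam m η u u' (proj pil pib (q : ℝ)) e :=
    Measurable.iInf hDQ
  unfold kfun
  apply Measurable.ite (measurableSet_lt measurable_const continuous_abs.measurable) _
    measurable_const
  exact Measurable.ite (measurableSet_lt hu' hu) hsup
    (Measurable.ite (measurableSet_lt hu hu') hinf measurable_const)

def CH (lam : ℝ) (m : ℕ) (B : ℝ) : ℝ :=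
  (Real.exp (lam * max B ((m:ℝ) + Real.pi/2)) + lam * max B ((m:ℝ) + Real.pi/2)) / lam

lemma CH_nonneg {lam : ℝ} (hlam : 0 < lam) (m : ℕ) {B : ℝ} (hB : 0 ≤ B) : 0 ≤ CH lam m B := by
  unfold CH
  have h1 : (0:ℝ) ≤ max B ((m:ℝ) + Real.pi/2) := le_trans hB (le_max_left _ _)
  have := Real.exp_pos (lam * max B ((m:ℝ) + Real.pi/2))
  apply div_nonneg _ hlam.le
  nlinarith

lemma Hf_abs_le {lam : ℝ} (hlam : 0 < lam) (m : ℕ) {x B : ℝ} (hx : |x| ≤ B) :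
    |Hf lam m x| ≤ CH lam m B := by
  set B' := max B ((m:ℝ) + Real.pi/2) with hB'
  have hB : 0 ≤ B := le_trans (abs_nonneg _) hx
  have hB'nn : 0 ≤ B' := le_trans hB (le_max_left _ _)
  set y := phim m x with hy
  have hy1 : y ≤ B' := le_trans (phim_le m x) (le_max_right _ _)
  have hy2 : -B' ≤ y := by
    apply phim_lower hB'nn
    have h1 := (abs_le.1 hx).1
    have h2 : B ≤ B' := le_max_left _ _
    linarith
  have hnn : 0 ≤ hpen lam y := hpen_nonneg hlam y
  have hHf : Hf lam m x = hpen lam y := rfl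
  rw [hHf, abs_of_nonneg hnn]
  unfold hpen CH
  rw [div_le_div_iff_of_pos_right hlam, ← hB']
  have hexp : Real.exp (lam * y) ≤ Real.exp (lam * B') := Real.exp_le_exp.2 (by nlinarith)
  nlinarith [Real.exp_pos (lam * B'), Real.exp_pos (lam * y),
    mul_nonneg hlam.le (show (0:ℝ) ≤ B' + y by linarith)]

lemma key_pointwise {lam pil pib : ℝ} (hlam : 0 < lam) (hpil : 0 < pil) (hpib : 0 < pib)
    (m : ℕ) {η u u' : ℝ → ℝ} {C₀ M : ℝ} (hη : ∀ e, |η e| ≤ C₀) (hC₀ : 0 ≤ C₀)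
    (hu : ∀ e, |u e| ≤ M) (hu' : ∀ e, |u' e| ≤ M) {p : ℝ} (hp : p ∈ Icc (-pil) pib) (e : ℝ) :
    (if 1/(m:ℝ) < |e| then Hf lam m (u e - p * η e) else 0)
      - (if 1/(m:ℝ) < |e| then Hf lam m (u' e - p * η e) else 0)
      ≤ kfun lam pil pib m η u u' e * (u e - u' e) := by
  set P := max pil pib with hP
  have hPpos : 0 < P := lt_of_lt_of_le hpil (le_max_left _ _)
  have hprojP : ∀ q : ℚ, |proj pil pib (q : ℝ)| ≤ P := by
    intro q
    have h := proj_mem (show -pil ≤ pib by linarith) (q : ℝ)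
    rw [Set.mem_Icc] at h
    rw [abs_le]
    have hpP : pil ≤ P := le_max_left _ _
    have hbP : pib ≤ P := le_max_right _ _
    exact ⟨by linarith [h.1], by linarith [h.2]⟩
  have hpabs : |p| ≤ P := by
    rw [Set.mem_Icc] at hp
    rw [abs_le]
    have hpP : pil ≤ P := le_max_left _ _
    have hbP : pib ≤ P := le_max_right _ _
    exact ⟨by linarith [hp.1], by linarith [hp.2]⟩
  by_cases hind : 1/(m:ℝ) < |e|
  · rw [if_pos hind, if_pos hind]
    unfold kfun
    rw [if_pos hind]
    have hcont : Continuous fun p' => DQ lam m η u u' p' e := by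
      unfold DQ
      apply Continuous.div_const
      apply Continuous.sub
      · exact (continuous_Hf lam m).comp (continuous_const.sub (continuous_id.mul continuous_const))
      · exact (continuous_Hf lam m).comp (continuous_const.sub (continuous_id.mul continuous_const))
    obtain ⟨s, hs⟩ := exists_seq_tendsto_proj hp
    have htend : Filter.Tendsto (fun n => DQ lam m η u u' (proj pil pib (s n : ℝ)) e)
        Filter.atTop (nhds (DQ lam m η u u' p e)) := (hcont.tendsto p).comp hs
    rcases lt_trichotomy (u' e) (u e) with h | h | h
    · rw [if_pos h]
      have hne : u e ≠ u' e := ne_of_gt h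
      have hd : 0 < u e - u' e := by linarith
      have hbdd : BddAbove (Set.range fun q : ℚ => DQ lam m η u u' (proj pil pib (q : ℝ)) e) := by
        refine ⟨Real.exp (lam * ((m:ℝ) + Real.pi/2)) - 1, ?_⟩
        rintro _ ⟨q, rfl⟩
        exact (DQ_bounds hlam m hη hu hu' hC₀ hPpos.le (hprojP q) hne).2
      have hle : DQ lam m η u u' p e ≤ ⨆ q : ℚ, DQ lam m η u u' (proj pil pib (q : ℝ)) e :=
        le_of_tendsto htend (Filter.Eventually.of_forall fun n => le_ciSup hbdd (s n))
      have heq : Hf lam m (u e - p * η e) - Hf lam m (u' e - p * η e)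
          = DQ lam m η u u' p e * (u e - u' e) := by
        unfold DQ
        rw [div_mul_cancel₀ _ (sub_ne_zero.2 hne)]
      rw [heq]
      exact mul_le_mul_of_nonneg_right hle hd.le
    · rw [if_neg (by rw [h]; exact lt_irrefl _), if_neg (by rw [h]; exact lt_irrefl _)]
      rw [h, sub_self, sub_self, one_mul]
    · rw [if_neg (by exact fun hc => absurd h (not_lt.2 hc.le)), if_pos h]
      have hne : u e ≠ u' e := ne_of_lt h
      have hd : u e - u' e < 0 := by linarith
      have hbddb : BddBelow (Set.range fun q : ℚ => DQ lam m η u u' (proj pil pib (q : ℝ)) e) := by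
        refine ⟨Real.exp (-(lam * (M + P * C₀))) - 1, ?_⟩
        rintro _ ⟨q, rfl⟩
        exact (DQ_bounds hlam m hη hu hu' hC₀ hPpos.le (hprojP q) hne).1
      have hge : (⨅ q : ℚ, DQ lam m η u u' (proj pil pib (q : ℝ)) e) ≤ DQ lam m η u u' p e :=
        ge_of_tendsto htend (Filter.Eventually.of_forall fun n => ciInf_le hbddb (s n))
      have heq : Hf lam m (u e - p * η e) - Hf lam m (u' e - p * η e)
          = DQ lam m η u u' p e * (u e - u' e) := by
        unfold DQ
        rw [div_mul_cancel₀ _ (sub_ne_zero.2 hne)]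
      rw [heq]
      exact mul_le_mul_of_nonpos_right hge hd.le
  · rw [if_neg hind, if_neg hind]
    unfold kfun
    rw [if_neg hind]
    norm_num


lemma integrable_of_abs_le_indicator {ρ : Measure ℝ} {f : ℝ → ℝ} (hf : AEStronglyMeasurable f ρ)
    {S : Set ℝ} (hS : MeasurableSet S) (hfin : ρ S ≠ ⊤) {D : ℝ}
    (hb : ∀ e, |f e| ≤ S.indicator (fun _ => D) e) : Integrable f ρ := by
  refine ⟨hf, ?_⟩
  rw [hasFiniteIntegral_iff_norm]
  have h1 : ∀ a, ENNReal.ofReal ‖f a‖ ≤ S.indicator (fun _ => ENNReal.ofReal D) a := by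
    intro a
    by_cases ha : a ∈ S
    · rw [Set.indicator_of_mem ha]
      apply ENNReal.ofReal_le_ofReal
      rw [Real.norm_eq_abs]
      have := hb a
      rwa [Set.indicator_of_mem ha] at this
    · rw [Set.indicator_of_notMem ha]
      have h2 := hb a
      rw [Set.indicator_of_notMem ha] at h2
      have : f a = 0 := abs_eq_zero.1 (le_antisymm h2 (abs_nonneg _))
      simp [this]
  calc ∫⁻ a, ENNReal.ofReal ‖f a‖ ∂ρ ≤ ∫⁻ a, S.indicator (fun _ => ENNReal.ofReal D) a ∂ρ :=
        lintegral_mono h1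
    _ = ENNReal.ofReal D * ρ S := lintegral_indicator_const hS _
    _ < ⊤ := ENNReal.mul_lt_top ENNReal.ofReal_lt_top (lt_top_iff_ne_top.2 hfin)

lemma integrable_of_bounded {ρ : Measure ℝ} [IsFiniteMeasure ρ] {f : ℝ → ℝ}
    (hf : AEStronglyMeasurable f ρ) {D : ℝ} (hb : ∀ e, |f e| ≤ D) : Integrable f ρ :=
  Integrable.mono' (integrable_const D) hf
    (Filter.Eventually.of_forall fun e => by rw [Real.norm_eq_abs]; exact hb e)


end FmCmp

/-- **Comparison structure of the approximating drivers**: for every `m ≥ 1` there is a map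
assigning to each pair of bounded Borel square-`ν`-integrable functions `u, u'` a Borel
function `k_m(u,u')` such that
(i) `f_m(z,u) − f_m(z,u') ≤ ∫ k_m(u,u')(e) (u(e) − u'(e)) ν(de)` for all `z`, and
(ii) for every `M > 0` there are constants `C̲_{M,m}, C̄_{M,m} > 0` such that whenever
`|u| ≤ M` and `|u'| ≤ M` pointwise, one has
`(−1 + C̲_{M,m}) 1_{|e|>1/m} ≤ k_m(u,u')(e) ≤ C̄_{M,m} 1_{|e|>1/m}` for all `e`. -/
theorem fm_comparison_structure
    (ν : Measure ℝ) [SigmaFinite ν]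
    (hν0 : ν {0} = 0)
    (hν2 : (∫⁻ e, ENNReal.ofReal (min 1 (e ^ 2)) ∂ν) < ⊤)
    (η γ : ℝ → ℝ) (hηmeas : Measurable η) (hγmeas : Measurable γ)
    (C₀ : ℝ) (hC₀ : 0 < C₀)
    (hηb : ∀ e, |η e| ≤ C₀ * min 1 |e|)
    (hγb : ∀ e, |γ e| ≤ C₀ * min 1 |e|)
    (hηint : Integrable η ν)
    (μ : Measure ℝ)
    (hμ : ∀ B : Set ℝ, MeasurableSet B → μ B = ν (γ ⁻¹' (B \ {0})))
    (K : ℝ → Measure ℝ) (hKmeas : Measurable K)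
    (hKprob : ∀ᵐ g ∂μ.restrict ({0}ᶜ : Set ℝ),
      K g Set.univ = 1 ∧ K g {e | γ e = g} = 1)
    (hdis : ∀ B : Set ℝ, MeasurableSet B →
      ν (B ∩ {e | γ e ≠ 0}) = ∫⁻ g in ({0}ᶜ : Set ℝ), K g B ∂μ)
    (lam pil pib : ℝ) (hlam : 0 < lam) (hpil : 0 < pil) (hpib : 0 < pib)
    (Cke : ℝ)
    (m : ℕ) (hm : 1 ≤ m) :
    ∃ k : (ℝ → ℝ) → (ℝ → ℝ) → ℝ → ℝ,
      (∀ u u' : ℝ → ℝ, Measurable u → Measurable u' →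
        (∃ M : ℝ, ∀ e, |u e| ≤ M) → (∃ M : ℝ, ∀ e, |u' e| ≤ M) →
        Integrable (fun e => (u e) ^ 2) ν → Integrable (fun e => (u' e) ^ 2) ν →
        Measurable (k u u') ∧
        ∀ z : ℝ,
          fm ν μ η γ K lam Cke pil pib m z u - fm ν μ η γ K lam Cke pil pib m z u'
            ≤ ∫ e, k u u' e * (u e - u' e) ∂ν) ∧
      (∀ M : ℝ, 0 < M →
        ∃ Cl Cu : ℝ, 0 < Cl ∧ 0 < Cu ∧
          ∀ u u' : ℝ → ℝ, Measurable u → Measurable u' →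
            Integrable (fun e => (u e) ^ 2) ν → Integrable (fun e => (u' e) ^ 2) ν →
            (∀ e, |u e| ≤ M) → (∀ e, |u' e| ≤ M) →
            ∀ e : ℝ,
              (-1 + Cl) * (if 1 / (m : ℝ) < |e| then 1 else 0) ≤ k u u' e ∧
              k u u' e ≤ Cu * (if 1 / (m : ℝ) < |e| then 1 else 0)) := by
  classical
  have hm0 : (0:ℝ) < (m:ℝ) := by exact_mod_cast Nat.lt_of_lt_of_le Nat.zero_lt_one hm
  have hinv : (0:ℝ) < 1/(m:ℝ) := by positivity
  set T : Set ℝ := Set.Icc (-(1/(m:ℝ))) (1/(m:ℝ)) with hT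
  have hTmeas : MeasurableSet T := measurableSet_Icc
  have hTc : ∀ e : ℝ, e ∈ Tᶜ ↔ 1/(m:ℝ) < |e| := by
    intro e
    rw [Set.mem_compl_iff, hT, Set.mem_Icc]
    constructor
    · intro h
      rw [not_and_or, not_le, not_le] at h
      rcases h with h | h
      · rw [lt_abs]; right; linarith
      · rw [lt_abs]; left; exact h
    · intro h hmem
      rcases lt_abs.1 h with h' | h' <;> linarith [hmem.1, hmem.2]
  have hγ0meas : MeasurableSet {e : ℝ | γ e = 0} := hγmeas (measurableSet_singleton 0)
  have hγnemeas : MeasurableSet {e : ℝ | γ e ≠ 0} := hγ0meas.compl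
  have hcompl0 : {e : ℝ | γ e = 0}ᶜ = {e : ℝ | γ e ≠ 0} := rfl
  have hνT : ν Tᶜ < ⊤ := by
    set c := min 1 ((1/(m:ℝ))^2) with hc
    have hcpos : (0:ℝ) < c := by positivity
    have hmeas : Measurable fun e : ℝ => ENNReal.ofReal (min 1 (e^2)) :=
      (measurable_const.min ((continuous_pow 2).measurable)).ennreal_ofReal
    have hsub : Tᶜ ⊆ {x : ℝ | ENNReal.ofReal c ≤ ENNReal.ofReal (min 1 (x^2))} := by
      intro x hx
      have h1 : 1/(m:ℝ) < |x| := (hTc x).1 hx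
      have h2 : (1/(m:ℝ))^2 ≤ x^2 := by nlinarith [abs_nonneg x, sq_abs x]
      have h3 : c ≤ min 1 (x^2) := le_min (min_le_left _ _) ((min_le_right _ _).trans h2)
      exact ENNReal.ofReal_le_ofReal h3
    have hmark := mul_meas_ge_le_lintegral₀ (μ := ν)
      (f := fun e : ℝ => ENNReal.ofReal (min 1 (e^2))) hmeas.aemeasurable (ENNReal.ofReal c)
    have hkey : ENNReal.ofReal c * ν Tᶜ ≤ ∫⁻ e, ENNReal.ofReal (min 1 (e^2)) ∂ν :=
      le_trans (by gcongr) hmark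
    rw [lt_top_iff_ne_top]
    intro htop
    rw [htop, ENNReal.mul_top (by
      simp only [ne_eq, ENNReal.ofReal_eq_zero, not_le]
      linarith)] at hkey
    exact absurd (hkey.trans_lt hν2) (lt_irrefl ⊤)
  have hνTne : ν Tᶜ ≠ ⊤ := hνT.ne
  haveI : IsFiniteMeasure (ν.restrict Tᶜ) :=
    ⟨by rw [Measure.restrict_apply MeasurableSet.univ, Set.univ_inter]; exact hνT⟩
  have hnumeas : numeas ν m = ν.restrict Tᶜ := by rw [hT]; rfl
  haveI : Nonempty (Set.Icc (-pil) pib) := ⟨⟨0, Set.mem_Icc.2 ⟨by linarith, by linarith⟩⟩⟩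
  set P := max pil pib with hP
  have hPpos : 0 < P := lt_of_lt_of_le hpil (le_max_left _ _)
  have hηb' : ∀ e, |η e| ≤ C₀ := by
    intro e
    calc |η e| ≤ C₀ * min 1 |e| := hηb e
      _ ≤ C₀ * 1 := mul_le_mul_of_nonneg_left (min_le_left _ _) hC₀.le
      _ = C₀ := mul_one C₀
  have habsP : ∀ p : Set.Icc (-pil) pib, |(p:ℝ)| ≤ P := by
    intro p
    have hp := p.2
    rw [Set.mem_Icc] at hp
    rw [abs_le]
    have h1 : pil ≤ P := le_max_left _ _
    have h2 : pib ≤ P := le_max_right _ _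
    exact ⟨by linarith [hp.1], by linarith [hp.2]⟩
  refine ⟨fun u u' => FmCmp.kfun lam pil pib m η u u', ?_, ?_⟩
  · -- part (i)
    rintro u u' hu hu' ⟨Mu, hMu⟩ ⟨Mu', hMu'⟩ hL2u hL2u'
    set M₀ := max Mu Mu' with hM₀
    have hM : ∀ e, |u e| ≤ M₀ := fun e => (hMu e).trans (le_max_left _ _)
    have hM' : ∀ e, |u' e| ≤ M₀ := fun e => (hMu' e).trans (le_max_right _ _)
    have hM₀nn : 0 ≤ M₀ := le_trans (abs_nonneg _) (hM 0)
    set k := FmCmp.kfun lam pil pib m η u u' with hk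
    have hkmeas : Measurable k := FmCmp.kfun_measurable m hu hu' hηmeas
    refine ⟨hkmeas, ?_⟩
    set U := max (Real.exp (lam*((m:ℝ)+Real.pi/2)) - 1) 1 with hUdef
    have hU1 : (1:ℝ) ≤ U := le_max_right _ _
    have hkabs : ∀ e, |k e| ≤ U * (if 1/(m:ℝ) < |e| then (1:ℝ) else 0) :=
      FmCmp.kfun_abs_le hlam hpil hpib m hηb' hC₀.le hM hM' 
    have hkzero : ∀ e ∈ T, k e = 0 := by
      intro e he
      have hind : ¬ (1/(m:ℝ) < |e|) := by
        intro hc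
        exact (notMem_compl_iff.2 he) ((hTc e).2 hc)
      have := hkabs e
      rw [if_neg hind, mul_zero] at this
      exact abs_eq_zero.1 (le_antisymm this (abs_nonneg _))
    set f := fun e => k e * (u e - u' e) with hf
    have hfmeas : Measurable f := hkmeas.mul (hu.sub hu')
    set D := U * (2 * M₀) with hD
    have hfb : ∀ e, |f e| ≤ Tᶜ.indicator (fun _ => D) e := by
      intro e
      by_cases he : e ∈ Tᶜ
      · rw [Set.indicator_of_mem he]
        have hind := (hTc e).1 he
        have h1 := hkabs e
        rw [if_pos hind, mul_one] at h1
        calc |f e| = |k e| * |u e - u' e| := abs_mul _ _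
          _ ≤ U * (2 * M₀) := by
              apply mul_le_mul h1 _ (abs_nonneg _) (by linarith)
              calc |u e - u' e| ≤ |u e| + |u' e| := abs_sub _ _
                _ ≤ 2 * M₀ := by linarith [hM e, hM' e]
      · rw [Set.indicator_of_notMem he]
        rw [notMem_compl_iff] at he
        rw [hf]
        simp [hkzero e he]
    have hfint : ∀ (ρ : Measure ℝ), ρ Tᶜ ≠ ⊤ → Integrable f ρ := fun ρ h =>
      FmCmp.integrable_of_abs_le_indicator hfmeas.aestronglyMeasurable hTmeas.compl h hfb
    set B₀ := M₀ + P * C₀ with hB₀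
    set CHB := FmCmp.CH lam m B₀ with hCHB
    have hB₀nn : 0 ≤ B₀ := by positivity
    have hCHBnn : 0 ≤ CHB := FmCmp.CH_nonneg hlam m hB₀nn
    have hHb : ∀ (w : ℝ → ℝ), (∀ e, |w e| ≤ M₀) → ∀ (p : ℝ), |p| ≤ P →
        ∀ e, |FmCmp.Hf lam m (w e - p * η e)| ≤ CHB := by
      intro w hw p hp e
      apply FmCmp.Hf_abs_le hlam m
      calc |w e - p * η e| ≤ |w e| + |p * η e| := abs_sub _ _
        _ ≤ B₀ := by
            rw [hB₀, abs_mul]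
            have := mul_le_mul hp (hηb' e) (abs_nonneg _) hPpos.le
            linarith [hw e]
    -- Part A
    have hA : ∀ z : ℝ, (⨅ p : Set.Icc (-pil) pib, f1m ν η γ lam Cke m z u p)
        ≤ (⨅ p : Set.Icc (-pil) pib, f1m ν η γ lam Cke m z u' p)
          + ∫ e in {e | γ e = 0}, f e ∂(numeas ν m) := by
      intro z
      set ρ₀ := (numeas ν m).restrict {e | γ e = 0} with hρ₀
      haveI : IsFiniteMeasure ρ₀ := by
        rw [hρ₀, hnumeas]
        infer_instance
      have hρ₀Tc : ρ₀ Tᶜ ≠ ⊤ := by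
        have hle : ρ₀ Tᶜ ≤ ν Tᶜ := by
          rw [hρ₀, hnumeas, Measure.restrict_apply hTmeas.compl,
            Measure.restrict_apply (hTmeas.compl.inter hγ0meas)]
          exact measure_mono Set.inter_subset_right
        exact (lt_of_le_of_lt hle hνT).ne
      have hae : ∀ᵐ e ∂ρ₀, e ∈ Tᶜ := by
        rw [hρ₀, hnumeas]
        exact ae_restrict_of_ae (ae_restrict_mem hTmeas.compl)
      have hint : ∀ (w : ℝ → ℝ), Measurable w → (∀ e, |w e| ≤ M₀) →
          ∀ p : Set.Icc (-pil) pib,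
          Integrable (fun e => FmCmp.Hf lam m (w e - (p:ℝ) * η e)) ρ₀ := by
        intro w hw hwb p
        apply FmCmp.integrable_of_bounded
        · exact ((FmCmp.continuous_Hf lam m).measurable.comp
            (hw.sub (measurable_const.mul hηmeas))).aestronglyMeasurable
        · exact hHb w hwb (p:ℝ) (habsP p)
      have hfρ₀ : Integrable f ρ₀ := hfint ρ₀ hρ₀Tc
      have hIeq : (∫ e in {e | γ e = 0}, f e ∂(numeas ν m)) = ∫ e, f e ∂ρ₀ := by rw [hρ₀]
      have hstep : ∀ p : Set.Icc (-pil) pib,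
          f1m ν η γ lam Cke m z u p ≤ f1m ν η γ lam Cke m z u' p
            + ∫ e in {e | γ e = 0}, f e ∂(numeas ν m) := by
        intro p
        have hdiff : f1m ν η γ lam Cke m z u p - f1m ν η γ lam Cke m z u' p
            = (∫ e, FmCmp.Hf lam m (u e - (p:ℝ) * η e) ∂ρ₀)
              - ∫ e, FmCmp.Hf lam m (u' e - (p:ℝ) * η e) ∂ρ₀ := by
          simp only [f1m, FmCmp.Hf, hρ₀]
          ring
        have hint1 := hint u hu hM p
        have hint2 := hint u' hu' hM' p
        have hmono : (∫ e, FmCmp.Hf lam m (u e - (p:ℝ)*η e) ∂ρ₀)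
            - (∫ e, FmCmp.Hf lam m (u' e - (p:ℝ)*η e) ∂ρ₀) ≤ ∫ e, f e ∂ρ₀ := by
          rw [← integral_sub hint1 hint2]
          apply integral_mono_ae (hint1.sub hint2) hfρ₀
          filter_upwards [hae] with e he
          have hkey := FmCmp.key_pointwise hlam hpil hpib m hηb' hC₀.le hM hM' p.2 e
          rw [if_pos ((hTc e).1 he), if_pos ((hTc e).1 he)] at hkey
          exact hkey
        rw [hIeq]
        linarith [hdiff, hmono]
      have hbdd : BddBelow (Set.range fun p : Set.Icc (-pil) pib =>
          f1m ν η γ lam Cke m z u p) := by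
        refine ⟨-(P * |∫ e in {e | γ e = 0}, η e ∂ν|), ?_⟩
        rintro _ ⟨p, rfl⟩
        have h1 : 0 ≤ lam / 2 * ((p:ℝ) - (z + Cke / lam)) ^ 2 * rhom m z :=
          mul_nonneg (mul_nonneg (by linarith) (sq_nonneg _)) (FmCmp.rhom_nonneg m z)
        have h2 : 0 ≤ ∫ e in {e | γ e = 0},
            hpen lam (phim m (u e - (p:ℝ) * η e)) ∂(numeas ν m) :=
          integral_nonneg fun e => FmCmp.hpen_nonneg hlam _
        have h3 : (p:ℝ) * (∫ e in {e | γ e = 0}, η e ∂ν)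
            ≤ P * |∫ e in {e | γ e = 0}, η e ∂ν| := by
          calc (p:ℝ) * (∫ e in {e | γ e = 0}, η e ∂ν)
              ≤ |(p:ℝ) * (∫ e in {e | γ e = 0}, η e ∂ν)| := le_abs_self _
            _ = |(p:ℝ)| * |∫ e in {e | γ e = 0}, η e ∂ν| := abs_mul _ _
            _ ≤ P * |∫ e in {e | γ e = 0}, η e ∂ν| :=
                mul_le_mul_of_nonneg_right (habsP p) (abs_nonneg _)
        simp only [f1m]
        linarith
      have h1 : (⨅ p : Set.Icc (-pil) pib, f1m ν η γ lam Cke m z u p)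
          - (∫ e in {e | γ e = 0}, f e ∂(numeas ν m))
          ≤ ⨅ p : Set.Icc (-pil) pib, f1m ν η γ lam Cke m z u' p := by
        apply le_ciInf
        intro p
        have h2 := ciInf_le hbdd p
        linarith [hstep p]
      linarith
    -- Part B
    have hB : (∫ g in ({0}ᶜ : Set ℝ), (⨅ p : Set.Icc (-pil) pib, f2m η γ K lam m g u p) ∂μ)
        ≤ (∫ g in ({0}ᶜ : Set ℝ), (⨅ p : Set.Icc (-pil) pib, f2m η γ K lam m g u' p) ∂μ)
          + ∫ e in {e | γ e ≠ 0}, f e ∂ν := by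
      set μ' := μ.restrict ({0}ᶜ : Set ℝ) with hμ'
      have hbind : ν.restrict {e : ℝ | γ e ≠ 0} = Measure.bind μ' K := by
        apply Measure.ext
        intro s hs
        rw [Measure.bind_apply hs hKmeas.aemeasurable, Measure.restrict_apply hs]
        exact hdis s hs
      have hdisφ : ∀ φ : ℝ → ENNReal, Measurable φ →
          ∫⁻ e, φ e ∂(ν.restrict {e : ℝ | γ e ≠ 0}) = ∫⁻ g, (∫⁻ e, φ e ∂K g) ∂μ' := by
        intro φ hφ
        rw [hbind]
        exact Measure.lintegral_bind hKmeas.aemeasurable hφ.aemeasurable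
      have hνne : (ν.restrict {e : ℝ | γ e ≠ 0}) Tᶜ ≠ ⊤ := by
        rw [Measure.restrict_apply hTmeas.compl]
        exact ((measure_mono Set.inter_subset_left).trans_lt hνT).ne
      have hgood : ∀ᵐ g ∂μ', K g Set.univ = 1 ∧ K g {e : ℝ | γ e = g} = 1 := hKprob
      -- basic per-good-g structure
      have hKg : ∀ g : ℝ, K g Set.univ = 1 → K g {e : ℝ | γ e = g} = 1 →
          (K g).restrict {e : ℝ | γ e = g} = K g ∧ IsProbabilityMeasure (K g) := by
        intro g h1 h2
        have hprob : IsProbabilityMeasure (K g) := ⟨h1⟩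
        have hsmeas : MeasurableSet {e : ℝ | γ e = g} := hγmeas (measurableSet_singleton g)
        have h0 : K g {e : ℝ | γ e = g}ᶜ = 0 := by
          rw [measure_compl hsmeas (by rw [h2]; exact ENNReal.one_ne_top), h2, h1, tsub_self]
        refine ⟨Measure.restrict_eq_self_of_ae_mem ?_, hprob⟩
        rw [ae_iff]
        exact h0
      -- pos and neg parts of f
      have hfpmeas : Measurable (fun e => ENNReal.ofReal (f e)) := hfmeas.ennreal_ofReal
      have hfnmeas : Measurable (fun e => ENNReal.ofReal (-(f e))) := hfmeas.neg.ennreal_ofReal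
      have hindbound : ∀ φ : ℝ → ENNReal,
          (∀ e, φ e ≤ Tᶜ.indicator (fun _ => ENNReal.ofReal D) e) →
          ∀ ρ : Measure ℝ, ρ Tᶜ ≠ ⊤ → ∫⁻ e, φ e ∂ρ ≠ ⊤ := by
        intro φ hφ ρ hρ
        have h1 : ∫⁻ e, φ e ∂ρ ≤ ENNReal.ofReal D * ρ Tᶜ := by
          calc ∫⁻ e, φ e ∂ρ ≤ ∫⁻ e, Tᶜ.indicator (fun _ => ENNReal.ofReal D) e ∂ρ :=
                lintegral_mono hφ
            _ = ENNReal.ofReal D * ρ Tᶜ := lintegral_indicator_const hTmeas.compl _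
        exact (h1.trans_lt (ENNReal.mul_lt_top ENNReal.ofReal_lt_top
          (lt_top_iff_ne_top.2 hρ))).ne
      have hfple : ∀ e, ENNReal.ofReal (f e) ≤ Tᶜ.indicator (fun _ => ENNReal.ofReal D) e := by
        intro e
        by_cases he : e ∈ Tᶜ
        · rw [Set.indicator_of_mem he]
          apply ENNReal.ofReal_le_ofReal
          have h2 := hfb e
          rw [Set.indicator_of_mem he] at h2
          exact (le_abs_self _).trans h2
        · rw [Set.indicator_of_notMem he]
          have h2 := hfb e
          rw [Set.indicator_of_notMem he] at h2
          have hfe : f e = 0 := abs_eq_zero.1 (le_antisymm h2 (abs_nonneg _))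
          simp [hfe]
      have hfnle : ∀ e, ENNReal.ofReal (-(f e)) ≤ Tᶜ.indicator (fun _ => ENNReal.ofReal D) e := by
        intro e
        by_cases he : e ∈ Tᶜ
        · rw [Set.indicator_of_mem he]
          apply ENNReal.ofReal_le_ofReal
          have h2 := hfb e
          rw [Set.indicator_of_mem he] at h2
          exact (neg_le_abs _).trans h2
        · rw [Set.indicator_of_notMem he]
          have h2 := hfb e
          rw [Set.indicator_of_notMem he] at h2
          have hfe : f e = 0 := abs_eq_zero.1 (le_antisymm h2 (abs_nonneg _))
          simp [hfe]
      have hAgmeas : Measurable (fun g => ∫⁻ e, ENNReal.ofReal (f e) ∂K g) :=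
        (Measure.measurable_lintegral hfpmeas).comp hKmeas
      have hBgmeas : Measurable (fun g => ∫⁻ e, ENNReal.ofReal (-(f e)) ∂K g) :=
        (Measure.measurable_lintegral hfnmeas).comp hKmeas
      have hAμ : ∫⁻ g, (∫⁻ e, ENNReal.ofReal (f e) ∂K g) ∂μ' ≠ ⊤ := by
        rw [← hdisφ _ hfpmeas]
        exact hindbound _ hfple _ hνne
      have hBμ : ∫⁻ g, (∫⁻ e, ENNReal.ofReal (-(f e)) ∂K g) ∂μ' ≠ ⊤ := by
        rw [← hdisφ _ hfnmeas]
        exact hindbound _ hfnle _ hνne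
      set Zr := fun g => (∫⁻ e, ENNReal.ofReal (f e) ∂K g).toReal
        - (∫⁻ e, ENNReal.ofReal (-(f e)) ∂K g).toReal with hZrdef
      have hAint : Integrable (fun g => (∫⁻ e, ENNReal.ofReal (f e) ∂K g).toReal) μ' :=
        integrable_toReal_of_lintegral_ne_top hAgmeas.aemeasurable hAμ
      have hBint : Integrable (fun g => (∫⁻ e, ENNReal.ofReal (-(f e)) ∂K g).toReal) μ' :=
        integrable_toReal_of_lintegral_ne_top hBgmeas.aemeasurable hBμ
      have hZrint : Integrable Zr μ' := hAint.sub hBint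
      have hfν' : Integrable f (ν.restrict {e : ℝ | γ e ≠ 0}) := hfint _ hνne
      have hI₂eq : ∫ e in {e : ℝ | γ e ≠ 0}, f e ∂ν = ∫ g, Zr g ∂μ' := by
        rw [integral_eq_lintegral_pos_part_sub_lintegral_neg_part hfν',
          hdisφ _ hfpmeas, hdisφ _ hfnmeas, hZrdef,
          integral_sub hAint hBint,
          integral_toReal hAgmeas.aemeasurable (ae_lt_top hAgmeas hAμ),
          integral_toReal hBgmeas.aemeasurable (ae_lt_top hBgmeas hBμ)]
      -- W1 and W2
      set W1 := fun g => (K g Tᶜ).toReal with hW1def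
      set W2 := fun g => (∫⁻ e, ENNReal.ofReal |η e| ∂K g).toReal with hW2def
      have hW1meas : Measurable W1 :=
        ENNReal.measurable_toReal.comp ((Measure.measurable_coe hTmeas.compl).comp hKmeas)
      have hW2meas : Measurable W2 :=
        ENNReal.measurable_toReal.comp
          ((Measure.measurable_lintegral hηmeas.abs.ennreal_ofReal).comp hKmeas)
      have hW1m' : Measurable fun g : ℝ => K g Tᶜ :=
        (Measure.measurable_coe hTmeas.compl).comp hKmeas
      have hW2m' : Measurable fun g : ℝ => ∫⁻ e, ENNReal.ofReal |η e| ∂K g :=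
        (Measure.measurable_lintegral hηmeas.abs.ennreal_ofReal).comp hKmeas
      have hW1int : Integrable W1 μ' := by
        apply integrable_toReal_of_lintegral_ne_top hW1m'.aemeasurable
        rw [← hdis Tᶜ hTmeas.compl]
        exact ((measure_mono Set.inter_subset_left).trans_lt hνT).ne
      have hW2int : Integrable W2 μ' := by
        apply integrable_toReal_of_lintegral_ne_top hW2m'.aemeasurable
        rw [← hdisφ _ hηmeas.abs.ennreal_ofReal]
        have hle : ∫⁻ e, ENNReal.ofReal |η e| ∂(ν.restrict {e : ℝ | γ e ≠ 0})
            ≤ ∫⁻ e, ENNReal.ofReal |η e| ∂ν :=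
          lintegral_mono' Measure.restrict_le_self (le_refl _)
        have hfin2 : ∫⁻ e, ENNReal.ofReal |η e| ∂ν < ⊤ := by
          have h2 := hηint.hasFiniteIntegral
          rw [hasFiniteIntegral_iff_norm] at h2
          simpa [Real.norm_eq_abs] using h2
        exact (hle.trans_lt hfin2).ne
      -- integrability of the Hf-type integrands w.r.t. any finite measure
      have hwint : ∀ (w : ℝ → ℝ), Measurable w → (∀ e, |w e| ≤ M₀) → ∀ p : ℝ, |p| ≤ P →
          ∀ ρ : Measure ℝ, IsFiniteMeasure ρ →
          Integrable (fun e => if 1/(m:ℝ) < |e| then hpen lam (phim m (w e - p * η e)) else 0) ρ := by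
        intro w hw hwb p hp ρ hρ
        haveI := hρ
        apply FmCmp.integrable_of_bounded
        · exact (Measurable.ite (measurableSet_lt measurable_const continuous_abs.measurable)
            ((FmCmp.continuous_Hf lam m).measurable.comp (hw.sub (measurable_const.mul hηmeas)))
            measurable_const).aestronglyMeasurable
        · intro e
          by_cases hind : 1/(m:ℝ) < |e|
          · rw [if_pos hind]
            exact hHb w hwb p hp e
          · rw [if_neg hind]
            simpa using hCHBnn
      -- lower bound for f2m at good g
      have hlowR : ∀ (w : ℝ → ℝ), ∀ g : ℝ,
          (K g).restrict {e : ℝ | γ e = g} = K g → IsProbabilityMeasure (K g) →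
          ∀ p : ℝ, |p| ≤ P → -(P * W2 g) ≤ f2m η γ K lam m g w p := by
        intro w g hrs hprob p hp
        haveI := hprob
        have hηKg : Integrable η (K g) :=
          FmCmp.integrable_of_bounded hηmeas.aestronglyMeasurable hηb'
        have hWeq : ∫ e, |η e| ∂K g = W2 g := by
          rw [hW2def]
          exact integral_eq_lintegral_of_nonneg_ae
            (Filter.Eventually.of_forall fun e => abs_nonneg _)
            hηmeas.abs.aestronglyMeasurable
        have h1 : 0 ≤ ∫ e, (if 1/(m:ℝ) < |e| then hpen lam (phim m (w e - p * η e)) else 0) ∂K g := by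
          apply integral_nonneg
          intro e
          show (0:ℝ) ≤ if 1/(m:ℝ) < |e| then hpen lam (phim m (w e - p * η e)) else 0
          by_cases hind : 1/(m:ℝ) < |e|
          · rw [if_pos hind]; exact FmCmp.hpen_nonneg hlam _
          · rw [if_neg hind]
        have h2 : p * (∫ e, η e ∂K g) ≤ P * W2 g := by
          rw [← hWeq]
          calc p * (∫ e, η e ∂K g) ≤ |p * (∫ e, η e ∂K g)| := le_abs_self _
            _ = |p| * |∫ e, η e ∂K g| := abs_mul _ _
            _ ≤ P * (∫ e, |η e| ∂K g) := by
                apply mul_le_mul hp _ (abs_nonneg _) hPpos.le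
                calc |∫ e, η e ∂K g| ≤ ∫ e, |η e| ∂K g := by
                      simpa [Real.norm_eq_abs] using norm_integral_le_integral_norm (μ := K g) η
                  _ ≤ ∫ e, |η e| ∂K g := le_refl _
        have hform : f2m η γ K lam m g w p
            = (∫ e, (if 1/(m:ℝ) < |e| then hpen lam (phim m (w e - p * η e)) else 0) ∂K g)
              - p * ∫ e, η e ∂K g := by
          simp only [f2m]
          rw [hrs]
        rw [hform]
        linarith
      -- the main per-w lemma : integrability of the inf
      have hIw : ∀ (w : ℝ → ℝ), Measurable w → (∀ e, |w e| ≤ M₀) →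
          Integrable (fun g => ⨅ p : Set.Icc (-pil) pib, f2m η γ K lam m g w p) μ' := by
        intro w hw hwb
        have hΦmeas : ∀ q : ℚ, Measurable (fun g =>
            (∫⁻ e, ENNReal.ofReal (if 1/(m:ℝ) < |e|
                then hpen lam (phim m (w e - FmCmp.proj pil pib q * η e)) else 0) ∂K g).toReal
            - FmCmp.proj pil pib q * ((∫⁻ e, ENNReal.ofReal (η e) ∂K g).toReal
                - (∫⁻ e, ENNReal.ofReal (-η e) ∂K g).toReal)) := by
          intro q
          apply Measurable.sub
          · exact ENNReal.measurable_toReal.comp ((Measure.measurable_lintegral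
              ((Measurable.ite (measurableSet_lt measurable_const continuous_abs.measurable)
                ((FmCmp.continuous_Hf lam m).measurable.comp
                  (hw.sub (measurable_const.mul hηmeas)))
                measurable_const).ennreal_ofReal)).comp hKmeas)
          · exact measurable_const.mul
              ((ENNReal.measurable_toReal.comp
                ((Measure.measurable_lintegral hηmeas.ennreal_ofReal).comp hKmeas)).sub
               (ENNReal.measurable_toReal.comp
                ((Measure.measurable_lintegral hηmeas.neg.ennreal_ofReal).comp hKmeas)))
        have hGmeas : Measurable (fun g => ⨅ q : ℚ,
            ((∫⁻ e, ENNReal.ofReal (if 1/(m:ℝ) < |e|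
                then hpen lam (phim m (w e - FmCmp.proj pil pib q * η e)) else 0) ∂K g).toReal
            - FmCmp.proj pil pib q * ((∫⁻ e, ENNReal.ofReal (η e) ∂K g).toReal
                - (∫⁻ e, ENNReal.ofReal (-η e) ∂K g).toReal))) := Measurable.iInf hΦmeas
        have hae2 : ∀ᵐ g ∂μ',
            (⨅ q : ℚ,
              ((∫⁻ e, ENNReal.ofReal (if 1/(m:ℝ) < |e|
                  then hpen lam (phim m (w e - FmCmp.proj pil pib q * η e)) else 0) ∂K g).toReal
              - FmCmp.proj pil pib q * ((∫⁻ e, ENNReal.ofReal (η e) ∂K g).toReal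
                  - (∫⁻ e, ENNReal.ofReal (-η e) ∂K g).toReal)))
              = (⨅ p : Set.Icc (-pil) pib, f2m η γ K lam m g w p)
            ∧ ‖⨅ p : Set.Icc (-pil) pib, f2m η γ K lam m g w p‖
                ≤ CHB * W1 g + P * W2 g := by
          filter_upwards [hgood] with g hg
          obtain ⟨hrs, hprob⟩ := hKg g hg.1 hg.2
          haveI := hprob
          have hηKg : Integrable η (K g) :=
            FmCmp.integrable_of_bounded hηmeas.aestronglyMeasurable hηb'
          -- representation of f2m through lintegrals
          have hfeq : ∀ p : ℝ, f2m η γ K lam m g w p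
              = (∫⁻ e, ENNReal.ofReal (if 1/(m:ℝ) < |e|
                  then hpen lam (phim m (w e - p * η e)) else 0) ∂K g).toReal
                - p * ((∫⁻ e, ENNReal.ofReal (η e) ∂K g).toReal
                  - (∫⁻ e, ENNReal.ofReal (-η e) ∂K g).toReal) := by
            intro p
            have h1 : (∫ e in {e : ℝ | γ e = g},
                (if 1/(m:ℝ) < |e| then hpen lam (phim m (w e - p * η e)) else 0) ∂K g)
                = (∫⁻ e, ENNReal.ofReal (if 1/(m:ℝ) < |e|
                    then hpen lam (phim m (w e - p * η e)) else 0) ∂K g).toReal := by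
              rw [hrs]
              exact integral_eq_lintegral_of_nonneg_ae
                (Filter.Eventually.of_forall fun e => by
                  show (0:ℝ) ≤ if 1/(m:ℝ) < |e| then hpen lam (phim m (w e - p * η e)) else 0
                  by_cases hind : 1/(m:ℝ) < |e|
                  · rw [if_pos hind]; exact FmCmp.hpen_nonneg hlam _
                  · rw [if_neg hind])
                (Measurable.ite (measurableSet_lt measurable_const continuous_abs.measurable)
                  ((FmCmp.continuous_Hf lam m).measurable.comp
                    (hw.sub (measurable_const.mul hηmeas)))
                  measurable_const).aestronglyMeasurable
            have h2 : (∫ e in {e : ℝ | γ e = g}, η e ∂K g)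
                = (∫⁻ e, ENNReal.ofReal (η e) ∂K g).toReal
                  - (∫⁻ e, ENNReal.ofReal (-η e) ∂K g).toReal := by
              rw [hrs]
              exact integral_eq_lintegral_pos_part_sub_lintegral_neg_part hηKg
            simp only [f2m]
            rw [h1, h2]
          have hlow : ∀ p : Set.Icc (-pil) pib,
              -(P * W2 g) ≤ f2m η γ K lam m g w (p : ℝ) :=
            fun p => hlowR w g hrs hprob (p : ℝ) (habsP p)
          have hbddI : BddBelow (Set.range fun p : Set.Icc (-pil) pib =>
              f2m η γ K lam m g w (p : ℝ)) := by
            refine ⟨-(P * W2 g), ?_⟩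
            rintro _ ⟨p, rfl⟩
            exact hlow p
          have hprojmem : ∀ q : ℚ, FmCmp.proj pil pib (q : ℝ) ∈ Set.Icc (-pil) pib :=
            fun q => FmCmp.proj_mem (by linarith) (q : ℝ)
          have habsproj : ∀ q : ℚ, |FmCmp.proj pil pib (q : ℝ)| ≤ P := by
            intro q
            have hmem := hprojmem q
            rw [Set.mem_Icc] at hmem
            rw [abs_le]
            have h1 : pil ≤ P := le_max_left _ _
            have h2 : pib ≤ P := le_max_right _ _
            exact ⟨by linarith [hmem.1], by linarith [hmem.2]⟩
          have hbddQ : BddBelow (Set.range fun q : ℚ =>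
              f2m η γ K lam m g w (FmCmp.proj pil pib (q : ℝ))) := by
            refine ⟨-(P * W2 g), ?_⟩
            rintro _ ⟨q, rfl⟩
            exact hlowR w g hrs hprob _ (habsproj q)
          -- continuity along the projected rational sequences
          have htend : ∀ p : ℝ, p ∈ Set.Icc (-pil) pib → ∀ s : ℕ → ℚ,
              Filter.Tendsto (fun n => FmCmp.proj pil pib (s n : ℝ)) Filter.atTop (nhds p) →
              Filter.Tendsto (fun n => f2m η γ K lam m g w (FmCmp.proj pil pib (s n : ℝ)))
                Filter.atTop (nhds (f2m η γ K lam m g w p)) := by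
            intro p hp s hs
            have hform : ∀ p' : ℝ, f2m η γ K lam m g w p'
                = (∫ e, (if 1/(m:ℝ) < |e| then hpen lam (phim m (w e - p' * η e)) else 0) ∂K g)
                  - p' * ∫ e, η e ∂K g := by
              intro p'
              simp only [f2m]
              rw [hrs]
            simp only [hform]
            apply Filter.Tendsto.sub
            · apply tendsto_integral_of_dominated_convergence (fun _ => CHB)
              · intro n
                exact (Measurable.ite
                  (measurableSet_lt measurable_const continuous_abs.measurable)
                  ((FmCmp.continuous_Hf lam m).measurable.comp
                    (hw.sub (measurable_const.mul hηmeas)))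
                  measurable_const).aestronglyMeasurable
              · exact integrable_const CHB
              · intro n
                apply Filter.Eventually.of_forall
                intro e
                show ‖if 1/(m:ℝ) < |e|
                    then hpen lam (phim m (w e - FmCmp.proj pil pib ((s n : ℚ) : ℝ) * η e))
                    else 0‖ ≤ CHB
                rw [Real.norm_eq_abs]
                by_cases hind : 1/(m:ℝ) < |e|
                · rw [if_pos hind]
                  exact hHb w hwb _ (habsproj (s n)) e
                · rw [if_neg hind]
                  simpa using hCHBnn
              · apply Filter.Eventually.of_forall
                intro e
                show Filter.Tendsto (fun n => if 1/(m:ℝ) < |e|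
                    then hpen lam (phim m (w e - FmCmp.proj pil pib ((s n : ℚ) : ℝ) * η e))
                    else 0) Filter.atTop (nhds (if 1/(m:ℝ) < |e|
                    then hpen lam (phim m (w e - p * η e)) else 0))
                by_cases hind : 1/(m:ℝ) < |e|
                · simp only [if_pos hind]
                  have hc : Continuous fun p' : ℝ => hpen lam (phim m (w e - p' * η e)) :=
                    (FmCmp.continuous_Hf lam m).comp
                      (continuous_const.sub (continuous_id.mul continuous_const))
                  exact (hc.tendsto p).comp hs
                · simp only [if_neg hind]
                  exact tendsto_const_nhds
            · exact hs.mul_const _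
          -- the two infima agree
          have hiInfeq : (⨅ p : Set.Icc (-pil) pib, f2m η γ K lam m g w p)
              = ⨅ q : ℚ, f2m η γ K lam m g w (FmCmp.proj pil pib (q : ℝ)) := by
            apply le_antisymm
            · exact le_ciInf fun q => ciInf_le hbddI ⟨_, hprojmem q⟩
            · apply le_ciInf
              intro p
              obtain ⟨s, hs⟩ := FmCmp.exists_seq_tendsto_proj p.2
              refine ge_of_tendsto (htend (p : ℝ) p.2 s hs)
                (Filter.Eventually.of_forall fun n => ?_)
              exact ciInf_le hbddQ (s n)
          constructor
          · rw [hiInfeq]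
            apply iInf_congr
            intro q
            exact (hfeq (FmCmp.proj pil pib (q : ℝ))).symm
          · -- norm bound
            have hup : (⨅ p : Set.Icc (-pil) pib, f2m η γ K lam m g w p)
                ≤ CHB * W1 g := by
              have h0mem : (0:ℝ) ∈ Set.Icc (-pil) pib :=
                Set.mem_Icc.2 ⟨by linarith, by linarith⟩
              refine le_trans (ciInf_le hbddI ⟨0, h0mem⟩) ?_
              have hform := hfeq (0:ℝ)
              have hform2 : f2m η γ K lam m g w 0
                  = (∫ e, (if 1/(m:ℝ) < |e| then hpen lam (phim m (w e - 0 * η e)) else 0) ∂K g) := by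
                simp only [f2m]
                rw [hrs, zero_mul, sub_zero]
              rw [hform2]
              have hint0 := hwint w hw hwb 0 (by simpa using hPpos.le) (K g) inferInstance
              have hindint : Integrable (Tᶜ.indicator fun _ => CHB) (K g) :=
                (integrable_const CHB).indicator hTmeas.compl
              calc (∫ e, (if 1/(m:ℝ) < |e| then hpen lam (phim m (w e - 0 * η e)) else 0) ∂K g)
                  ≤ ∫ e, Tᶜ.indicator (fun _ => CHB) e ∂K g := by
                    apply integral_mono hint0 hindint
                    intro e
                    show (if 1/(m:ℝ) < |e| then hpen lam (phim m (w e - 0 * η e)) else 0)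
                      ≤ Tᶜ.indicator (fun _ => CHB) e
                    by_cases he : e ∈ Tᶜ
                    · rw [Set.indicator_of_mem he, if_pos ((hTc e).1 he)]
                      exact (le_abs_self _).trans (hHb w hwb 0 (by simpa using hPpos.le) e)
                    · rw [Set.indicator_of_notMem he,
                        if_neg (fun hc => he ((hTc e).2 hc))]
                _ = (K g Tᶜ).toReal • CHB := integral_indicator_const CHB hTmeas.compl
                _ = CHB * W1 g := by rw [smul_eq_mul, hW1def, mul_comm]
            have hlo : -(P * W2 g) ≤ ⨅ p : Set.Icc (-pil) pib, f2m η γ K lam m g w p :=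
              le_ciInf hlow
            have hW1nn : 0 ≤ W1 g := ENNReal.toReal_nonneg
            have hW2nn : 0 ≤ W2 g := ENNReal.toReal_nonneg
            rw [Real.norm_eq_abs, abs_le]
            constructor
            · have : 0 ≤ CHB * W1 g := mul_nonneg hCHBnn hW1nn
              linarith
            · have : 0 ≤ P * W2 g := mul_nonneg hPpos.le hW2nn
              linarith
        have hGae : (fun g => ⨅ q : ℚ,
            ((∫⁻ e, ENNReal.ofReal (if 1/(m:ℝ) < |e|
                then hpen lam (phim m (w e - FmCmp.proj pil pib q * η e)) else 0) ∂K g).toReal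
            - FmCmp.proj pil pib q * ((∫⁻ e, ENNReal.ofReal (η e) ∂K g).toReal
                - (∫⁻ e, ENNReal.ofReal (-η e) ∂K g).toReal)))
            =ᵐ[μ'] fun g => ⨅ p : Set.Icc (-pil) pib, f2m η γ K lam m g w p :=
          hae2.mono fun g h => h.1
        have hAESM : AEStronglyMeasurable
            (fun g => ⨅ p : Set.Icc (-pil) pib, f2m η γ K lam m g w p) μ' :=
          hGmeas.aestronglyMeasurable.congr hGae
        exact Integrable.mono' ((hW1int.const_mul CHB).add (hW2int.const_mul P)) hAESM
          (hae2.mono fun g h => h.2)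
      have hIu := hIw u hu hM
      have hIu' := hIw u' hu' hM'
      -- a.e. comparison
      have hBae : ∀ᵐ g ∂μ', (⨅ p : Set.Icc (-pil) pib, f2m η γ K lam m g u p)
          - (⨅ p : Set.Icc (-pil) pib, f2m η γ K lam m g u' p) ≤ Zr g := by
        filter_upwards [hgood] with g hg
        obtain ⟨hrs, hprob⟩ := hKg g hg.1 hg.2
        haveI := hprob
        have hfKg : Integrable f (K g) := hfint _ (measure_lt_top _ _).ne
        have hZg : Zr g = ∫ e, f e ∂K g :=
          (integral_eq_lintegral_pos_part_sub_lintegral_neg_part hfKg).symm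
        have hbddIu : BddBelow (Set.range fun p : Set.Icc (-pil) pib =>
            f2m η γ K lam m g u (p : ℝ)) := by
          refine ⟨-(P * W2 g), ?_⟩
          rintro _ ⟨p, rfl⟩
          exact hlowR u g hrs hprob (p : ℝ) (habsP p)
        have hstep2 : ∀ p : Set.Icc (-pil) pib,
            f2m η γ K lam m g u (p : ℝ) ≤ f2m η γ K lam m g u' (p : ℝ) + Zr g := by
          intro p
          have hint1 := hwint u hu hM (p : ℝ) (habsP p) (K g) inferInstance
          have hint2 := hwint u' hu' hM' (p : ℝ) (habsP p) (K g) inferInstance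
          have hd2 : f2m η γ K lam m g u (p : ℝ) - f2m η γ K lam m g u' (p : ℝ)
              = (∫ e, (if 1/(m:ℝ) < |e| then hpen lam (phim m (u e - (p:ℝ) * η e)) else 0) ∂K g)
                - ∫ e, (if 1/(m:ℝ) < |e| then hpen lam (phim m (u' e - (p:ℝ) * η e)) else 0) ∂K g := by
            simp only [f2m]
            rw [hrs]
            show _ - _ - (_ - _) = _
            ring
          have hmono2 : (∫ e, (if 1/(m:ℝ) < |e| then hpen lam (phim m (u e - (p:ℝ) * η e)) else 0) ∂K g)
              - (∫ e, (if 1/(m:ℝ) < |e| then hpen lam (phim m (u' e - (p:ℝ) * η e)) else 0) ∂K g)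
              ≤ ∫ e, f e ∂K g := by
            rw [← integral_sub hint1 hint2]
            apply integral_mono (hint1.sub hint2) hfKg
            intro e
            show (if 1/(m:ℝ) < |e| then hpen lam (phim m (u e - (p:ℝ) * η e)) else 0)
                - (if 1/(m:ℝ) < |e| then hpen lam (phim m (u' e - (p:ℝ) * η e)) else 0)
              ≤ f e
            exact FmCmp.key_pointwise hlam hpil hpib m hηb' hC₀.le hM hM' p.2 e
          rw [hZg]
          linarith [hd2, hmono2]
        have h1 : (⨅ p : Set.Icc (-pil) pib, f2m η γ K lam m g u p) - Zr g
            ≤ ⨅ p : Set.Icc (-pil) pib, f2m η γ K lam m g u' p := by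
          apply le_ciInf
          intro p
          have h2 := ciInf_le hbddIu p
          linarith [hstep2 p]
        linarith
      have hfinal : (∫ g, (⨅ p : Set.Icc (-pil) pib, f2m η γ K lam m g u p) ∂μ')
          - (∫ g, (⨅ p : Set.Icc (-pil) pib, f2m η γ K lam m g u' p) ∂μ')
          ≤ ∫ g, Zr g ∂μ' := by
        rw [← integral_sub hIu hIu']
        exact integral_mono_ae (hIu.sub hIu') hZrint hBae
      rw [hI₂eq]
      linarith [hfinal]
    -- splitting of the total integral
    have hsplit : (∫ e in {e | γ e = 0}, f e ∂(numeas ν m)) + (∫ e in {e | γ e ≠ 0}, f e ∂ν)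
        = ∫ e, f e ∂ν := by
      have hνint := hfint ν hνTne
      have h1 : (∫ e in {e | γ e = 0}, f e ∂ν) + (∫ e in {e | γ e ≠ 0}, f e ∂ν)
          = ∫ e, f e ∂ν := by
        rw [← hcompl0]
        exact integral_add_compl hγ0meas hνint
      have h2 : ∫ e in {e | γ e = 0}, f e ∂(numeas ν m) = ∫ e in {e | γ e = 0}, f e ∂ν := by
        rw [hnumeas, Measure.restrict_restrict hγ0meas]
        have hfi : f = Tᶜ.indicator f := by
          funext e
          by_cases he : e ∈ Tᶜ
          · rw [Set.indicator_of_mem he]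
          · rw [Set.indicator_of_notMem he]
            rw [notMem_compl_iff] at he
            simp [hf, hkzero e he]
        conv_rhs => rw [hfi]
        rw [integral_indicator hTmeas.compl, Measure.restrict_restrict hTmeas.compl,
          Set.inter_comm]
      rw [h2]
      exact h1
    intro z
    have hd : fm ν μ η γ K lam Cke pil pib m z u - fm ν μ η γ K lam Cke pil pib m z u'
        = ((⨅ p : Set.Icc (-pil) pib, f1m ν η γ lam Cke m z u p)
            - (⨅ p : Set.Icc (-pil) pib, f1m ν η γ lam Cke m z u' p))
          + ((∫ g in ({0}ᶜ : Set ℝ), (⨅ p : Set.Icc (-pil) pib, f2m η γ K lam m g u p) ∂μ)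
            - (∫ g in ({0}ᶜ : Set ℝ), (⨅ p : Set.Icc (-pil) pib, f2m η γ K lam m g u' p) ∂μ)) := by
      simp only [fm]; ring
    have hAz := hA z
    have hle : fm ν μ η γ K lam Cke pil pib m z u - fm ν μ η γ K lam Cke pil pib m z u'
        ≤ ∫ e, f e ∂ν := by
      rw [hd, ← hsplit]
      linarith
    exact hle
  · -- part (ii)
    intro M hM
    refine ⟨Real.exp (-(lam * (M + P * C₀))),
      max (Real.exp (lam*((m:ℝ)+Real.pi/2)) - 1) 1,
      Real.exp_pos _, lt_of_lt_of_le one_pos (le_max_right _ _), ?_⟩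
    intro u u' hu hu' _ _ hub hub' e
    obtain ⟨h1, h2⟩ := FmCmp.kfun_bounds hlam hpil hpib m hηb' hC₀.le hub hub' e
    constructor
    · calc (-1 + Real.exp (-(lam * (M + P * C₀)))) * (if 1/(m:ℝ) < |e| then (1:ℝ) else 0)
          = (Real.exp (-(lam * (M + P * C₀))) - 1) * (if 1/(m:ℝ) < |e| then (1:ℝ) else 0) := by
            ring
        _ ≤ _ := h1
    · exact h2
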